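/- Fix c > 0, a > 0, b > 0 and γ > 0. For each N ≥ 1 let (α_τ(N))_{τ≥1} be reals with α_τ(N) ≥ a, let (M_τ(N))_{τ≥1} be positive integers with M_τ(N) ≥ bN, and let T(N) be positive integers such that lim_{N→∞} ∑_{τ=1}^{T(N)} ( 1/(N + α_τ(N) − 1) − 1/(N + M_τ(N) + α_τ(N) − 1) ) = γ. Then for every u ∈ ℂ, lim_{N→∞} ₍c₎G_N(u) · ∏_{τ=1}^{T(N)} ₍c₎G_{N+α_τ(N)−1}(u) / ₍c₎G_{N+M_τ(N)+α_τ(N)−1}(u) = exp( −γ ( c(c+1)/2 + c·u ) ) (for each fixed u the expression is well defined for all sufficiently large N). -/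

import Mathlib

open Filter Finset Complex Asymptotics
set_option maxHeartbeats 1000000

/-- `₍c₎G_L(u) := L^{−c} · Γ(L−u)/Γ(L−u−c)` where `L^{−c} = exp(−c log L)` (real log). -/
noncomputable def cGL (c : ℝ) (L : ℝ) (u : ℂ) : ℂ :=
  (Real.exp (-c * Real.log L) : ℝ) * Complex.Gamma ((L : ℂ) - u) / Complex.Gamma ((L : ℂ) - u - c)

/-- the one-step ratio `cGL c x u / cGL c (x+1) u`. -/
noncomputable def rfac (c : ℝ) (u : ℂ) (x : ℝ) : ℂ :=
  (Real.exp (c * Real.log (1 + 1/x)) : ℝ) * (((x:ℂ) - u - c)/((x:ℂ) - u))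

noncomputable def Kc (c : ℝ) (u : ℂ) : ℂ := ((c * (c + 1) / 2 : ℝ) : ℂ) + (c:ℂ) * u

section step
variable {c : ℝ} {u : ℂ} {x : ℝ}

lemma xu_ne (hc : 0 < c) (hx2 : u.re + c + 1 ≤ x) : (x:ℂ) - u ≠ 0 := by
  intro h
  have := congrArg Complex.re h
  simp [Complex.sub_re] at this
  linarith

lemma xuc_ne (hx2 : u.re + c + 1 ≤ x) : (x:ℂ) - u - c ≠ 0 := by
  intro h
  have := congrArg Complex.re h
  simp [Complex.sub_re] at this
  linarith

lemma gamma_xu_ne (hc : 0 < c) (hx2 : u.re + c + 1 ≤ x) : Complex.Gamma ((x:ℂ) - u) ≠ 0 := by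
  apply Complex.Gamma_ne_zero_of_re_pos
  simp [Complex.sub_re]
  linarith

lemma gamma_xuc_ne (hx2 : u.re + c + 1 ≤ x) : Complex.Gamma ((x:ℂ) - u - c) ≠ 0 := by
  apply Complex.Gamma_ne_zero_of_re_pos
  simp [Complex.sub_re]
  linarith

lemma cGL_ne_zero (hc : 0 < c) (hx2 : u.re + c + 1 ≤ x) : cGL c x u ≠ 0 := by
  unfold cGL
  apply div_ne_zero _ (gamma_xuc_ne hx2)
  exact mul_ne_zero (by exact_mod_cast Real.exp_ne_zero _) (gamma_xu_ne hc hx2)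

lemma cGL_step (hc : 0 < c) (hx1 : 1 ≤ x) (hx2 : u.re + c + 1 ≤ x) :
    cGL c x u = cGL c (x + 1) u * rfac c u x := by
  have hx0 : (0:ℝ) < x := by linarith
  have h1 : (x:ℂ) - u ≠ 0 := xu_ne hc hx2
  have h2 : (x:ℂ) - u - c ≠ 0 := xuc_ne hx2
  have hg1 : Complex.Gamma ((x:ℂ) - u) ≠ 0 := gamma_xu_ne hc hx2
  have hg2 : Complex.Gamma ((x:ℂ) - u - c) ≠ 0 := gamma_xuc_ne hx2
  have e1 : ((x + 1 : ℝ) : ℂ) - u = ((x:ℂ) - u) + 1 := by push_cast; ring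
  have e2 : ((x + 1 : ℝ) : ℂ) - u - c = ((x:ℂ) - u - c) + 1 := by push_cast; ring
  have hlog : Real.log (1 + 1/x) = Real.log (x + 1) - Real.log x := by
    rw [show 1 + 1/x = (x+1)/x by field_simp, Real.log_div (by linarith) (by linarith)]
  have hexp : (Real.exp (-c * Real.log (x+1)) : ℂ) * (Real.exp (c * Real.log (1 + 1/x)) : ℂ)
      = (Real.exp (-c * Real.log x) : ℂ) := by
    rw [← Complex.ofReal_mul, ← Real.exp_add, hlog]; ring_nf
  unfold cGL rfac
  rw [e1, show (x:ℂ) - u + 1 - c = ((x:ℂ) - u - c) + 1 by ring,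
    Complex.Gamma_add_one _ h1, Complex.Gamma_add_one _ h2]
  rw [← hexp]
  field_simp

lemma cGL_prod (hc : 0 < c) {L : ℝ} (hx1 : 1 ≤ L) (hx2 : u.re + c + 1 ≤ L) (m : ℕ) :
    cGL c L u = cGL c (L + m) u * ∏ j ∈ Finset.range m, rfac c u (L + j) := by
  induction m with
  | zero => simp
  | succ m ih =>
      rw [ih, Finset.prod_range_succ,
        show L + ((m + 1 : ℕ) : ℝ) = (L + m) + 1 by push_cast; ring]
      rw [cGL_step hc (by have : (0:ℝ) ≤ m := Nat.cast_nonneg m; linarith) (by have : (0:ℝ) ≤ m := Nat.cast_nonneg m; linarith)]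
      ring

lemma cGL_div_eq_prod (hc : 0 < c) {L : ℝ} (hx1 : 1 ≤ L) (hx2 : u.re + c + 1 ≤ L) (m : ℕ) :
    cGL c L u / cGL c (L + m) u = ∏ j ∈ Finset.range m, rfac c u (L + j) := by
  rw [cGL_prod hc hx1 hx2 m, mul_comm, mul_div_assoc, div_self, mul_one]
  exact cGL_ne_zero hc (by have : (0:ℝ) ≤ m := Nat.cast_nonneg m; linarith)

lemma expA (hc : 0 < c) :
    (fun t : ℝ => Real.exp (c * Real.log (1+t)) - (1 + c*t + c*(c-1)/2*t^2))
      =O[nhdsWithin (0:ℝ) (Set.Ioi 0)] fun t => t^3 := by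
  rw [Asymptotics.isBigO_iff]
  refine ⟨c^3 + 2*c + 2*c^2, ?_⟩
  have hev : ∀ᶠ t in nhdsWithin (0:ℝ) (Set.Ioi 0), t ∈ Set.Ioo (0:ℝ) (min (1/2) (1/c)) :=
    Ioo_mem_nhdsGT_of_mem ⟨le_refl 0, by positivity⟩
  filter_upwards [hev] with t ht
  obtain ⟨ht0, htm⟩ := ht
  have ht2 : t ≤ 1/2 := le_of_lt (lt_of_lt_of_le htm (min_le_left _ _))
  have htc : c * t ≤ 1 := by
    have h := lt_of_lt_of_le htm (min_le_right (1/2) (1/c))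
    rw [lt_div_iff₀ hc] at h; linarith [mul_comm t c]
  have habs : |(-t)| = t := by rw [abs_neg, abs_of_pos ht0]
  have hsum : (∑ i ∈ Finset.range 2, (-t) ^ (i + 1) / (i + 1)) = -t + t^2/2 := by
    norm_num [Finset.sum_range_succ]
  have key := Real.abs_log_sub_add_sum_range_le (x := -t) (by rw [habs]; linarith) 2
  rw [hsum, habs, show 1 - -t = 1 + t by ring] at key
  have h1 : |Real.log (1+t) - t + t^2/2| ≤ 2*t^3 := by
    rw [show Real.log (1+t) - t + t^2/2 = (-t + t^2/2) + Real.log (1+t) by ring]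
    refine le_trans key ?_
    rw [show t^(2+1) = t^3 by ring, div_le_iff₀ (by linarith)]
    have hh : 2*t^3*t ≤ 2*t^3*(1/2) :=
      mul_le_mul_of_nonneg_left ht2 (by positivity)
    nlinarith
  set g := c * Real.log (1+t) with hgdef
  have hlog0 : 0 ≤ Real.log (1+t) := Real.log_nonneg (by linarith)
  have hloget : Real.log (1+t) ≤ t := by
    have := Real.log_le_sub_one_of_pos (x := 1+t) (by linarith); linarith
  have hg0 : 0 ≤ g := mul_nonneg hc.le hlog0
  have hgle : g ≤ c*t := mul_le_mul_of_nonneg_left hloget hc.le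
  have hg1 : |g| ≤ 1 := by rw [_root_.abs_of_nonneg hg0]; linarith
  have key2 := Real.exp_bound hg1 (n := 3) (by norm_num)
  have hsum3 : (∑ m ∈ Finset.range 3, g ^ m / m.factorial) = 1 + g + g^2/2 := by
    norm_num [Finset.sum_range_succ, Nat.factorial]
  rw [hsum3] at key2
  norm_num [Nat.factorial] at key2
  have hg3 : |g|^3 ≤ c^3*t^3 := by
    rw [_root_.abs_of_nonneg hg0]
    calc g^3 ≤ (c*t)^3 := pow_le_pow_left₀ hg0 hgle 3
      _ = c^3*t^3 := by ring
  have h3 : |g - c*t + c*t^2/2| ≤ 2*c*t^3 := by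
    rw [show g - c*t + c*t^2/2 = c * (Real.log (1+t) - t + t^2/2) by rw [hgdef]; ring,
      abs_mul, abs_of_pos hc]
    nlinarith [abs_nonneg (Real.log (1+t) - t + t^2/2)]
  have h4 : |g^2 - c^2*t^2| ≤ 3*c^2*t^3 := by
    have e1 : |g - c*t| ≤ (3/2)*c*t^2 := by
      have := abs_sub_abs_le_abs_sub (g - c*t) (c*t^2/2)
      have h5 : |g - c*t| ≤ |g - c*t + c*t^2/2| + |c*t^2/2| := by
        calc |g - c*t| = |(g - c*t + c*t^2/2) + (-(c*t^2/2))| := by ring_nf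
          _ ≤ |g - c*t + c*t^2/2| + |(-(c*t^2/2))| := abs_add_le _ _
          _ = |g - c*t + c*t^2/2| + |c*t^2/2| := by rw [abs_neg]
      have h6 : |c*t^2/2| = c*t^2/2 := abs_of_nonneg (by positivity)
      rw [h6] at h5
      have hh : 0 ≤ (c*t^2)*(1-2*t) :=
        mul_nonneg (mul_nonneg hc.le (pow_nonneg ht0.le 2)) (by linarith)
      nlinarith
    have e2 : |g + c*t| ≤ 2*c*t := by
      rw [_root_.abs_of_nonneg (by nlinarith : (0:ℝ) ≤ g + c*t)]; linarith
    calc |g^2 - c^2*t^2| = |g - c*t| * |g + c*t| := by rw [← abs_mul]; ring_nf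
      _ ≤ ((3/2)*c*t^2) * (2*c*t) := by
          apply mul_le_mul e1 e2 (abs_nonneg _) (by positivity)
      _ = 3*c^2*t^3 := by ring
  have expand : Real.exp g - (1 + c*t + c*(c-1)/2*t^2)
      = (Real.exp g - (1+g+g^2/2)) + (g - c*t + c*t^2/2) + (g^2 - c^2*t^2)/2 := by ring
  rw [Real.norm_eq_abs, Real.norm_eq_abs, abs_of_pos (pow_pos ht0 3), expand]
  calc |Real.exp g - (1+g+g^2/2) + (g - c*t + c*t^2/2) + (g^2 - c^2*t^2)/2|
      ≤ |Real.exp g - (1+g+g^2/2)| + |g - c*t + c*t^2/2| + |(g^2 - c^2*t^2)/2| := by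
        refine le_trans (abs_add_le _ _) ?_
        gcongr
        exact abs_add_le _ _
    _ ≤ (c^3 + 2*c + 2*c^2) * t^3 := by
        rw [abs_div, abs_of_pos (by norm_num : (0:ℝ) < 2)]
        nlinarith [key2, h3, h4, hg3, mul_pos (pow_pos hc 3) (pow_pos ht0 3)]

lemma expA' (hc : 0 < c) :
    (fun x : ℝ => Real.exp (c * Real.log (1 + 1/x)) - (1 + c*(1/x) + c*(c-1)/2*(1/x)^2))
      =O[atTop] fun x : ℝ => (1/x)^3 := by
  have h := (expA hc).comp_tendsto (tendsto_inv_atTop_nhdsGT_zero (𝕜 := ℝ))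
  simpa [Function.comp_def, one_div] using h

lemma normx (x : ℝ) (hx : 0 ≤ x) : ‖((x:ℝ):ℂ)‖ = x := by
  rw [Complex.norm_real, Real.norm_eq_abs, _root_.abs_of_nonneg hx]

lemma norm_xu_ge {x : ℝ} (hx : 2*‖u‖ ≤ x) : x/2 ≤ ‖(x:ℂ) - u‖ := by
  have h1 : ‖((x:ℝ):ℂ)‖ - ‖u‖ ≤ ‖(x:ℂ) - u‖ := norm_sub_norm_le _ _
  have hx0 : (0:ℝ) ≤ x := le_trans (by positivity) hx
  rw [normx x hx0] at h1
  linarith [norm_nonneg u]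

lemma hB (hc : 0 < c) :
    (fun x : ℝ => ((x:ℂ) - u - c)/((x:ℂ) - u)
        - (1 - (c:ℂ)*((1/x:ℝ):ℂ) - (c:ℂ)*u*((1/x:ℝ):ℂ)^2))
      =O[atTop] fun x : ℝ => (1/x)^3 := by
  rw [isBigO_iff]
  refine ⟨2*c*‖u‖^2, ?_⟩
  filter_upwards [eventually_ge_atTop (max 1 (2*‖u‖))] with x hx
  have hx1 : (1:ℝ) ≤ x := le_trans (le_max_left _ _) hx
  have hx0 : (0:ℝ) < x := by linarith
  have hxu : x/2 ≤ ‖(x:ℂ) - u‖ := norm_xu_ge (le_trans (le_max_right _ _) hx)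
  have hne : (x:ℂ) - u ≠ 0 := by
    intro h; rw [h, norm_zero] at hxu; linarith
  have hxc : ((x:ℝ):ℂ) ≠ 0 := by
    simpa using (show (x:ℝ) ≠ 0 by linarith)
  have heq : ((x:ℂ) - u - c)/((x:ℂ) - u)
        - (1 - (c:ℂ)*((1/x:ℝ):ℂ) - (c:ℂ)*u*((1/x:ℝ):ℂ)^2)
      = -(c:ℂ)*u^2*(((x:ℂ) - u)⁻¹ * ((1/x:ℝ):ℂ)^2) := by
    push_cast
    field_simp
    ring
  rw [heq]
  have hnorm : ‖-(c:ℂ)*u^2*(((x:ℂ) - u)⁻¹ * ((1/x:ℝ):ℂ)^2)‖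
      = c*‖u‖^2*(‖(x:ℂ) - u‖⁻¹ * (1/x)^2) := by
    simp only [norm_neg, norm_mul, norm_pow, norm_inv, Complex.norm_real, Real.norm_eq_abs]
    rw [abs_of_pos hc, abs_of_pos (by positivity : (0:ℝ) < 1/x)]
  rw [hnorm, Real.norm_eq_abs, abs_of_pos (by positivity : (0:ℝ) < (1/x)^3)]
  have h2 : (0:ℝ) < ‖(x:ℂ) - u‖ := lt_of_lt_of_le (by positivity) hxu
  have hinv : ‖(x:ℂ) - u‖⁻¹ ≤ 2/x := by
    rw [show (2:ℝ)/x = (x/2)⁻¹ by field_simp]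
    exact inv_anti₀ (by positivity) hxu
  calc c*‖u‖^2*(‖(x:ℂ) - u‖⁻¹*(1/x)^2) ≤ c*‖u‖^2*((2/x)*(1/x)^2) := by gcongr
    _ = 2*c*‖u‖^2*(1/x)^3 := by ring

lemma hBbdd (hc : 0 < c) :
    (fun x : ℝ => ((x:ℂ) - u - c)/((x:ℂ) - u)) =O[atTop] (fun _ : ℝ => (1:ℝ)) := by
  rw [isBigO_iff]
  refine ⟨4, ?_⟩
  filter_upwards [eventually_ge_atTop (max 1 (max (2*‖u‖) (‖u‖ + c)))] with x hx
  have hx1 : (1:ℝ) ≤ x := le_trans (le_max_left _ _) hx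
  have hxu : x/2 ≤ ‖(x:ℂ) - u‖ :=
    norm_xu_ge (le_trans (le_trans (le_max_left _ _) (le_max_right _ _)) hx)
  have hxc : ‖u‖ + c ≤ x := le_trans (le_trans (le_max_right _ _) (le_max_right _ _)) hx
  have h2 : (0:ℝ) < ‖(x:ℂ) - u‖ := lt_of_lt_of_le (by positivity) hxu
  rw [norm_div, div_le_iff₀ h2]
  have hnum : ‖(x:ℂ) - u - c‖ ≤ x + ‖u‖ + c := by
    calc ‖(x:ℂ) - u - c‖ ≤ ‖(x:ℂ) - u‖ + ‖(c:ℂ)‖ := norm_sub_le _ _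
      _ ≤ (‖((x:ℝ):ℂ)‖ + ‖u‖) + ‖(c:ℂ)‖ := by gcongr; exact norm_sub_le _ _
      _ = x + ‖u‖ + c := by
          rw [normx x (by linarith), Complex.norm_real, Real.norm_eq_abs, abs_of_pos hc]
  calc ‖(x:ℂ) - u - c‖ ≤ x + ‖u‖ + c := hnum
    _ ≤ 2*x := by linarith
    _ ≤ 4 * ‖(1:ℝ)‖ * ‖(x:ℂ) - u‖ := by
        rw [norm_one, mul_one]
        linarith

lemma hp (hc : 0 < c) :
    (fun x : ℝ => ((1:ℂ) + (c:ℂ)*((1/x:ℝ):ℂ) + ((c*(c-1)/2 : ℝ):ℂ)*((1/x:ℝ):ℂ)^2))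
      =O[atTop] (fun _ : ℝ => (1:ℝ)) := by
  rw [isBigO_iff]
  refine ⟨1 + c + |c*(c-1)/2|, ?_⟩
  filter_upwards [eventually_ge_atTop 1] with x hx
  have hx0 : (0:ℝ) < x := by linarith
  have h1 : (1:ℝ)/x ≤ 1 := by rw [div_le_one hx0]; linarith
  have h0 : (0:ℝ) ≤ 1/x := by positivity
  rw [norm_one, mul_one]
  calc ‖(1:ℂ) + (c:ℂ)*((1/x:ℝ):ℂ) + ((c*(c-1)/2 : ℝ):ℂ)*((1/x:ℝ):ℂ)^2‖
      ≤ ‖(1:ℂ) + (c:ℂ)*((1/x:ℝ):ℂ)‖ + ‖((c*(c-1)/2 : ℝ):ℂ)*((1/x:ℝ):ℂ)^2‖ := norm_add_le _ _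
    _ ≤ (‖(1:ℂ)‖ + ‖(c:ℂ)*((1/x:ℝ):ℂ)‖) + ‖((c*(c-1)/2 : ℝ):ℂ)*((1/x:ℝ):ℂ)^2‖ := by
        gcongr; exact norm_add_le _ _
    _ ≤ 1 + c + |c*(c-1)/2| := by
        rw [norm_one, norm_mul, norm_mul, norm_pow, Complex.norm_real, Complex.norm_real,
          Complex.norm_real, Real.norm_eq_abs, Real.norm_eq_abs, Real.norm_eq_abs,
          abs_of_pos hc, _root_.abs_of_nonneg h0]
        have e1 : c * (1/x) ≤ c := by nlinarith
        have e2 : |c*(c-1)/2| * (1/x)^2 ≤ |c*(c-1)/2| := by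
          nlinarith [abs_nonneg (c*(c-1)/2), pow_le_one₀ h0 h1 (n := 2)]
        linarith

lemma hpoly (hc : 0 < c) :
    (fun x : ℝ => ((1:ℂ) + (c:ℂ)*((1/x:ℝ):ℂ) + ((c*(c-1)/2 : ℝ):ℂ)*((1/x:ℝ):ℂ)^2)
        * (1 - (c:ℂ)*((1/x:ℝ):ℂ) - (c:ℂ)*u*((1/x:ℝ):ℂ)^2) - 1 + Kc c u * ((1/x:ℝ):ℂ)^2)
      =O[atTop] fun x : ℝ => (1/x)^3 := by
  have heq : ∀ x : ℝ, ((1:ℂ) + (c:ℂ)*((1/x:ℝ):ℂ) + ((c*(c-1)/2 : ℝ):ℂ)*((1/x:ℝ):ℂ)^2)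
        * (1 - (c:ℂ)*((1/x:ℝ):ℂ) - (c:ℂ)*u*((1/x:ℝ):ℂ)^2) - 1 + Kc c u * ((1/x:ℝ):ℂ)^2
      = ((1/x:ℝ):ℂ)^3 * (-(c:ℂ)^2*u - (c:ℂ)*((c*(c-1)/2 : ℝ):ℂ)
            - (c:ℂ)*((c*(c-1)/2 : ℝ):ℂ)*u*((1/x:ℝ):ℂ)) := by
    intro x
    unfold Kc
    push_cast
    ring
  have h1 : (fun x : ℝ => ((1/x:ℝ):ℂ)^3) =O[atTop] fun x : ℝ => (1/x)^3 := by
    rw [isBigO_iff]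
    exact ⟨1, by filter_upwards with x; rw [norm_pow, Complex.norm_real]; simp⟩
  have h2 : (fun x : ℝ => (-(c:ℂ)^2*u - (c:ℂ)*((c*(c-1)/2 : ℝ):ℂ)
        - (c:ℂ)*((c*(c-1)/2 : ℝ):ℂ)*u*((1/x:ℝ):ℂ))) =O[atTop] (fun _ : ℝ => (1:ℝ)) := by
    apply Filter.Tendsto.isBigO_one
    have h0 : Filter.Tendsto (fun x : ℝ => (x⁻¹:ℝ)) atTop (nhds 0) := tendsto_inv_atTop_zero
    have h0' := h0.congr (fun x => (one_div x).symm)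
    have : Filter.Tendsto (fun x : ℝ => ((1/x:ℝ):ℂ)) atTop (nhds 0) := by
      rw [show ((0:ℂ)) = ((0:ℝ):ℂ) by norm_num]
      exact Complex.continuous_ofReal.continuousAt.tendsto.comp h0'
    have := ((tendsto_const_nhds (x := -(c:ℂ)^2*u - (c:ℂ)*((c*(c-1)/2 : ℝ):ℂ))).sub
      (this.const_mul ((c:ℂ)*((c*(c-1)/2 : ℝ):ℂ)*u)))
    simpa using this
  have := h1.mul h2
  simp only [mul_one] at this
  exact (Asymptotics.isBigO_congr (by filter_upwards with x; rw [heq x]) (by rfl)).mpr this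

lemma rfacW (hc : 0 < c) :
    (fun x : ℝ => rfac c u x - 1 + Kc c u * ((1/x:ℝ):ℂ)^2) =O[atTop] fun x : ℝ => (1/x)^3 := by
  have hA : (fun x : ℝ => ((Real.exp (c * Real.log (1 + 1/x))
        - (1 + c*(1/x) + c*(c-1)/2*(1/x)^2) : ℝ) : ℂ)) =O[atTop] fun x : ℝ => (1/x)^3 :=
    Complex.isBigO_ofReal_left.mpr (expA' hc)
  have t1 := hA.mul (hBbdd (u := u) hc)
  have t2 := (hp hc).mul (hB (u := u) hc)
  simp only [mul_one, one_mul] at t1 t2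
  have tsum := (t1.add t2).add (hpoly (u := u) hc)
  refine (Asymptotics.isBigO_congr ?_ (by rfl)).mpr tsum
  filter_upwards with x
  unfold rfac
  push_cast
  ring

lemma t2_big : (fun x : ℝ => ((1/x:ℝ):ℂ)^2) =O[atTop] fun x : ℝ => (1/x)^2 := by
  rw [isBigO_iff]
  exact ⟨1, by filter_upwards with x; rw [norm_pow, Complex.norm_real]; simp⟩

lemma t3_le_t2 : (fun x : ℝ => (1/x)^3) =O[atTop] fun x : ℝ => (1/x)^2 := by
  rw [isBigO_iff]
  refine ⟨1, ?_⟩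
  filter_upwards [eventually_ge_atTop 1] with x hx
  have hx0 : (0:ℝ) < x := by linarith
  rw [Real.norm_eq_abs, Real.norm_eq_abs, abs_of_pos (by positivity : (0:ℝ) < (1/x)^3),
    abs_of_pos (by positivity : (0:ℝ) < (1/x)^2), one_mul]
  have h1 : (1:ℝ)/x ≤ 1 := by rw [div_le_one hx0]; linarith
  have h0 : (0:ℝ) ≤ 1/x := by positivity
  nlinarith [pow_nonneg h0 2]

lemma rfac_sub_one (hc : 0 < c) :
    (fun x : ℝ => rfac c u x - 1) =O[atTop] fun x : ℝ => (1/x)^2 := by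
  have h1 := (rfacW (u := u) hc).trans t3_le_t2
  have h2 : (fun x : ℝ => Kc c u * ((1/x:ℝ):ℂ)^2) =O[atTop] fun x : ℝ => (1/x)^2 :=
    t2_big.const_mul_left _
  have := h1.sub h2
  refine (Asymptotics.isBigO_congr ?_ (by rfl)).mpr this
  filter_upwards with x; ring

lemma one_div_pow_tendsto (n : ℕ) (hn : 0 < n) :
    Filter.Tendsto (fun x : ℝ => (1/x)^n) atTop (nhds 0) := by
  have h0 : Filter.Tendsto (fun x : ℝ => (x⁻¹:ℝ)) atTop (nhds 0) := tendsto_inv_atTop_zero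
  have h0' := h0.congr (fun x => (one_div x).symm)
  have := h0'.pow n
  simpa [zero_pow hn.ne'] using this

lemma rfac_tendsto_one (hc : 0 < c) :
    Filter.Tendsto (rfac c u) atTop (nhds 1) := by
  rw [← tendsto_sub_nhds_zero_iff]
  exact (rfac_sub_one hc).trans_tendsto (one_div_pow_tendsto 2 (by norm_num))

lemma rfac_small (hc : 0 < c) : ∀ᶠ x : ℝ in atTop, ‖rfac c u x - 1‖ ≤ 1/2 := by
  have h : Filter.Tendsto (fun x => ‖rfac c u x - 1‖) atTop (nhds 0) := by
    simpa using (tendsto_sub_nhds_zero_iff.mpr (rfac_tendsto_one hc)).norm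
  exact (h.eventually (gt_mem_nhds (by norm_num : (0:ℝ) < 1/2))).mono fun x hx => le_of_lt hx

lemma rfacLog (hc : 0 < c) :
    (fun x : ℝ => Complex.log (rfac c u x)
        + Kc c u * (((1/x:ℝ):ℂ) - ((1/(x+1):ℝ):ℂ)))
      =O[atTop] fun x : ℝ => (1/x)^3 := by
  obtain ⟨C0, hC0⟩ := Asymptotics.isBigO_iff.mp (rfac_sub_one (u := u) hc)
  set C1 := |C0| + 1 with hC1def
  have hC1 : (0:ℝ) < C1 := by positivity
  have part1 : (fun x : ℝ => Complex.log (rfac c u x) - (rfac c u x - 1))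
      =O[atTop] fun x : ℝ => (1/x)^3 := by
    rw [isBigO_iff]
    refine ⟨C1^2, ?_⟩
    filter_upwards [hC0, rfac_small (u := u) hc, eventually_ge_atTop 1] with x hw hsmall hx1
    have hx0 : (0:ℝ) < x := by linarith
    have hw1 : ‖rfac c u x - 1‖ ≤ C1 * (1/x)^2 := by
      refine le_trans hw ?_
      rw [Real.norm_eq_abs, abs_of_pos (by positivity : (0:ℝ) < (1/x)^2)]
      have : C0 ≤ C1 := by rw [hC1def]; linarith [le_abs_self C0]
      nlinarith [pow_nonneg (by positivity : (0:ℝ) ≤ 1/x) 2]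
    have hkey := Complex.norm_log_one_add_sub_self_le
      (z := rfac c u x - 1) (lt_of_le_of_lt hsmall (by norm_num))
    rw [show (1:ℂ) + (rfac c u x - 1) = rfac c u x by ring] at hkey
    have hinv : (1 - ‖rfac c u x - 1‖)⁻¹ ≤ 2 := by
      rw [inv_le_comm₀ (by linarith) (by norm_num)]
      linarith
    have hb : ‖Complex.log (rfac c u x) - (rfac c u x - 1)‖ ≤ ‖rfac c u x - 1‖^2 := by
      refine le_trans hkey ?_
      have h2 : ‖rfac c u x - 1‖^2 * (1 - ‖rfac c u x - 1‖)⁻¹ ≤ ‖rfac c u x - 1‖^2 * 2 := by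
        gcongr
      nlinarith [sq_nonneg (‖rfac c u x - 1‖)]
    refine le_trans hb ?_
    rw [Real.norm_eq_abs, abs_of_pos (by positivity : (0:ℝ) < (1/x)^3)]
    have hq : ‖rfac c u x - 1‖^2 ≤ (C1 * (1/x)^2)^2 := by
      apply pow_le_pow_left₀ (norm_nonneg _) hw1
    refine le_trans hq ?_
    have h1 : (1:ℝ)/x ≤ 1 := by rw [div_le_one hx0]; linarith
    have h0 : (0:ℝ) ≤ 1/x := by positivity
    calc (C1 * (1/x)^2)^2 = C1^2 * ((1/x)^3 * (1/x)) := by ring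
      _ ≤ C1^2 * ((1/x)^3 * 1) := by gcongr
      _ = C1^2 * (1/x)^3 := by ring
  have part3 : (fun x : ℝ => Kc c u * (((1/x:ℝ):ℂ) - ((1/(x+1):ℝ):ℂ))
      - Kc c u * ((1/x:ℝ):ℂ)^2) =O[atTop] fun x : ℝ => (1/x)^3 := by
    rw [isBigO_iff]
    refine ⟨‖Kc c u‖, ?_⟩
    filter_upwards [eventually_ge_atTop 1] with x hx1
    have hx0 : (0:ℝ) < x := by linarith
    have hxn : (x:ℝ) ≠ 0 := by linarith
    have hxn1 : (x+1:ℝ) ≠ 0 := by linarith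
    have hre : 1/x - 1/(x+1) - (1/x)^2 = -(1/(x^2*(x+1))) := by field_simp; ring
    have heq : Kc c u * (((1/x:ℝ):ℂ) - ((1/(x+1):ℝ):ℂ)) - Kc c u * ((1/x:ℝ):ℂ)^2
        = Kc c u * (((-(1/(x^2*(x+1)))) : ℝ) : ℂ) := by
      rw [← hre]; push_cast; ring
    rw [heq, norm_mul, Complex.norm_real, Real.norm_eq_abs, Real.norm_eq_abs, abs_neg,
      abs_of_pos (by positivity : (0:ℝ) < 1/(x^2*(x+1))),
      abs_of_pos (by positivity : (0:ℝ) < (1/x)^3)]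
    have hle : 1/(x^2*(x+1)) ≤ (1/x)^3 := by
      rw [div_pow, one_pow]
      apply one_div_le_one_div_of_le (by positivity)
      nlinarith
    exact mul_le_mul_of_nonneg_left hle (norm_nonneg _)
  have tsum := (part1.add (rfacW (u := u) hc)).add part3
  refine (Asymptotics.isBigO_congr ?_ (by rfl)).mpr tsum
  filter_upwards with x; ring

lemma rfac_bound (hc : 0 < c) :
    ∃ C : ℝ, 0 < C ∧ ∃ x₁ : ℝ, 2 ≤ x₁ ∧ u.re + c + 1 ≤ x₁ ∧ ∀ x : ℝ, x₁ ≤ x →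
      rfac c u x ≠ 0 ∧ ‖rfac c u x - 1‖ ≤ 1/2 ∧
      ‖Complex.log (rfac c u x) + Kc c u * (((1/x:ℝ):ℂ) - ((1/(x+1):ℝ):ℂ))‖ ≤ C * (1/x)^3 := by
  obtain ⟨C0, hC0⟩ := Asymptotics.isBigO_iff.mp (rfacLog (u := u) hc)
  have hev := hC0.and ((rfac_small (u := u) hc).and (eventually_ge_atTop (1:ℝ)))
  rw [Filter.eventually_atTop] at hev
  obtain ⟨x₀, hx₀⟩ := hev
  refine ⟨|C0| + 1, by positivity, max x₀ (max 2 (u.re + c + 1)),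
    le_trans (le_max_left _ _) (le_max_right _ _),
    le_trans (le_max_right _ _) (le_max_right _ _), ?_⟩
  intro x hx
  obtain ⟨h1, h2, h3⟩ := hx₀ x (le_trans (le_max_left _ _) hx)
  have hx2 : (2:ℝ) ≤ x := le_trans (le_trans (le_max_left _ _) (le_max_right _ _)) hx
  have hx0 : (0:ℝ) < x := by linarith
  refine ⟨?_, h2, ?_⟩
  · intro h
    rw [h] at h2
    simp at h2
    linarith
  · refine le_trans h1 ?_
    rw [Real.norm_eq_abs, abs_of_pos (by positivity : (0:ℝ) < (1/x)^3)]
    have : C0 ≤ |C0| + 1 := by linarith [le_abs_self C0]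
    nlinarith [pow_nonneg (by positivity : (0:ℝ) ≤ 1/x) 3]

lemma tendsto_inv_nat_c : Filter.Tendsto (fun m : ℕ => ((m:ℂ))⁻¹) atTop (nhds 0) := by
  have h : Filter.Tendsto (fun m : ℕ => ((1/(m:ℝ) : ℝ) : ℂ)) atTop (nhds ((0:ℝ):ℂ)) :=
    Complex.continuous_ofReal.continuousAt.tendsto.comp tendsto_one_div_atTop_nhds_zero_nat
  simp only [Complex.ofReal_zero] at h
  refine h.congr fun m => ?_
  push_cast
  ring

lemma ratio_tendsto_one (v w : ℂ) :
    Filter.Tendsto (fun m : ℕ => (v + m)/(w + m)) atTop (nhds 1) := by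
  have hnum : Filter.Tendsto (fun m : ℕ => v * ((m:ℂ))⁻¹ + 1) atTop (nhds 1) := by
    have := tendsto_inv_nat_c.const_mul v
    simpa using (this.add_const 1)
  have hden : Filter.Tendsto (fun m : ℕ => w * ((m:ℂ))⁻¹ + 1) atTop (nhds 1) := by
    have := tendsto_inv_nat_c.const_mul w
    simpa using (this.add_const 1)
  have := hnum.div hden one_ne_zero
  rw [div_one] at this
  refine this.congr' ?_
  filter_upwards [eventually_ge_atTop 1] with m hm
  have hm0 : ((m:ℂ)) ≠ 0 := by
    simp only [ne_eq, Nat.cast_eq_zero]; omega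
  rw [Pi.div_apply, ← mul_div_mul_right _ _ hm0]
  congr 1 <;> field_simp

lemma ne_zero_of_re_pos' {z : ℂ} (h : 0 < z.re) : z ≠ 0 := by
  intro hz; rw [hz] at h; simp at h

lemma gammaSeq_ratio (hc : 0 < c) (v : ℂ) (hv : 0 < v.re) (hvc : 0 < (v - (c:ℂ)).re) :
    Filter.Tendsto (fun m : ℕ => ((Real.exp (c * Real.log m) : ℝ) : ℂ)
        * ∏ j ∈ Finset.range (m+1), ((v - (c:ℂ) + j)/(v + j)))
      atTop (nhds (Complex.Gamma v / Complex.Gamma (v - (c:ℂ)))) := by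
  have h := (Complex.GammaSeq_tendsto_Gamma v).div (Complex.GammaSeq_tendsto_Gamma (v - (c:ℂ)))
    (Complex.Gamma_ne_zero_of_re_pos hvc)
  refine h.congr' ?_
  filter_upwards [eventually_ge_atTop 1] with m hm
  have hm0 : ((m:ℕ):ℂ) ≠ 0 := Nat.cast_ne_zero.mpr (by omega)
  have hfac : ((m.factorial : ℕ):ℂ) ≠ 0 := Nat.cast_ne_zero.mpr (Nat.factorial_ne_zero m)
  have hP1 : (∏ j ∈ Finset.range (m+1), (v + (j:ℂ))) ≠ 0 :=
    Finset.prod_ne_zero_iff.mpr fun j _ => ne_zero_of_re_pos' (by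
      simp only [Complex.add_re, Complex.natCast_re]
      have : (0:ℝ) ≤ j := Nat.cast_nonneg j
      linarith)
  have hP2 : (∏ j ∈ Finset.range (m+1), (v - (c:ℂ) + (j:ℂ))) ≠ 0 :=
    Finset.prod_ne_zero_iff.mpr fun j _ => ne_zero_of_re_pos' (by
      have : (0:ℝ) ≤ j := Nat.cast_nonneg j
      have hj : (v - (c:ℂ) + (j:ℂ)).re = (v - (c:ℂ)).re + j := by
        simp [Complex.add_re, Complex.natCast_re]
      rw [hj]; linarith)
  have hcp : ((m:ℕ):ℂ) ^ (v - (c:ℂ)) ≠ 0 := by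
    simp [Complex.cpow_eq_zero_iff, hm0]
  have key : ((m:ℕ):ℂ)^v / ((m:ℕ):ℂ)^(v - (c:ℂ)) = ((Real.exp (c * Real.log m) : ℝ) : ℂ) := by
    rw [← Complex.cpow_sub _ _ hm0, show v - (v - (c:ℂ)) = (c:ℂ) by ring]
    have hm0' : (0:ℝ) < (m:ℝ) := by exact_mod_cast Nat.pos_of_ne_zero (by omega)
    rw [show ((m:ℕ):ℂ) = (((m:ℝ)):ℂ) by push_cast; rfl, ← Complex.ofReal_cpow (le_of_lt hm0') c,
      Real.rpow_def_of_pos hm0', mul_comm (Real.log (m:ℝ)) c]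
  show Complex.GammaSeq v m / Complex.GammaSeq (v - (c:ℂ)) m = _
  unfold Complex.GammaSeq
  rw [Finset.prod_div_distrib, ← key]
  field_simp

lemma log_one_add_one_div {x : ℝ} (hx : 0 < x) :
    Real.log (1 + 1/x) = Real.log (x+1) - Real.log x := by
  rw [show 1 + 1/x = (x+1)/x by field_simp, Real.log_div (by linarith) (by linarith)]

lemma prod_rfac_eq (hc : 0 < c) {N₀ : ℕ} (h1 : (1:ℝ) ≤ (N₀:ℝ)) (m : ℕ) :
    ∏ j ∈ Finset.range m, rfac c u ((N₀:ℝ) + j)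
      = ((Real.exp (c * (Real.log ((N₀:ℝ) + m) - Real.log (N₀:ℝ))) : ℝ) : ℂ)
        * ∏ j ∈ Finset.range m, ((((N₀:ℝ):ℂ) - u - (c:ℂ) + j)/(((N₀:ℝ):ℂ) - u + j)) := by
  unfold rfac
  rw [Finset.prod_mul_distrib]
  congr 1
  · rw [← Complex.ofReal_prod, ← Real.exp_sum]
    congr 2
    have : ∀ j ∈ Finset.range m, c * Real.log (1 + 1/((N₀:ℝ) + j))
        = c * (Real.log ((N₀:ℝ) + (j+1:ℕ)) - Real.log ((N₀:ℝ) + j)) := by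
      intro j _
      have hj0 : (0:ℝ) < (N₀:ℝ) + j := by
        have : (0:ℝ) ≤ j := Nat.cast_nonneg j; linarith
      rw [log_one_add_one_div hj0]
      push_cast
      ring_nf
    rw [Finset.sum_congr rfl this, ← Finset.mul_sum,
      Finset.sum_range_sub (fun j => Real.log ((N₀:ℝ) + j))]
    norm_num
  · refine Finset.prod_congr rfl fun j _ => ?_
    have e1 : (((N₀:ℝ) + j : ℝ):ℂ) - u - c = (((N₀:ℝ):ℂ) - u - (c:ℂ) + j) := by push_cast; ring
    have e2 : (((N₀:ℝ) + j : ℝ):ℂ) - u = (((N₀:ℝ):ℂ) - u + j) := by push_cast; ring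
    rw [e1, e2]

lemma rfac_ne_zero (hc : 0 < c) {x : ℝ} (hx2 : u.re + c + 1 ≤ x) : rfac c u x ≠ 0 := by
  unfold rfac
  apply mul_ne_zero
  · exact_mod_cast Real.exp_ne_zero _
  · exact div_ne_zero (xuc_ne hx2) (xu_ne hc hx2)


lemma cGL_nat_tendsto_one (hc : 0 < c) :
    Filter.Tendsto (fun N : ℕ => cGL c (N:ℝ) u) atTop (nhds 1) := by
  obtain ⟨N₀, hN₀⟩ := exists_nat_gt (max 1 (|u.re| + c + 1))
  rw [max_lt_iff] at hN₀
  obtain ⟨hN1, hNu⟩ := hN₀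
  have h1 : (1:ℝ) ≤ (N₀:ℝ) := le_of_lt hN1
  have hu' : u.re + c + 1 ≤ (N₀:ℝ) := by
    have := le_abs_self u.re; linarith
  set v : ℂ := ((N₀:ℝ):ℂ) - u with hvdef
  have hvre : v.re = (N₀:ℝ) - u.re := by simp [hvdef, Complex.sub_re]
  have hv : 0 < v.re := by rw [hvre]; linarith
  have hvc : 0 < (v - (c:ℂ)).re := by
    simp only [Complex.sub_re, hvre, Complex.ofReal_re]; linarith
  have hGS := gammaSeq_ratio hc v hv hvc
  have hrat : Filter.Tendsto (fun m : ℕ => (v + m)/(v - (c:ℂ) + m)) atTop (nhds 1) :=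
    ratio_tendsto_one v (v - (c:ℂ))
  have hlogratio : Filter.Tendsto (fun m : ℕ => ((N₀:ℝ) + m)/m) atTop (nhds 1) := by
    have h0 := tendsto_one_div_atTop_nhds_zero_nat.const_mul (N₀:ℝ)
    have h0' := h0.add_const 1
    norm_num at h0'
    refine h0'.congr' ?_
    filter_upwards [eventually_ge_atTop 1] with m hm
    have hm0 : (m:ℝ) ≠ 0 := Nat.cast_ne_zero.mpr (by omega)
    field_simp
  have hs : Filter.Tendsto
      (fun m : ℕ => c * (Real.log ((N₀:ℝ) + m) - Real.log (N₀:ℝ) - Real.log m))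
      atTop (nhds (c * (Real.log 1 - Real.log (N₀:ℝ)))) := by
    have hlog := (Real.continuousAt_log (by norm_num : (1:ℝ) ≠ 0)).tendsto.comp hlogratio
    have h2 := (hlog.sub_const (Real.log (N₀:ℝ))).const_mul c
    refine h2.congr' ?_
    filter_upwards [eventually_ge_atTop 1] with m hm
    have hm0 : (0:ℝ) < (m:ℝ) := by exact_mod_cast Nat.pos_of_ne_zero (by omega)
    have : Real.log (((N₀:ℝ) + m)/m) = Real.log ((N₀:ℝ) + m) - Real.log m :=
      Real.log_div (by positivity) (by positivity)
    simp only [Function.comp]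
    rw [this]
    ring
  have hF : Filter.Tendsto (fun m : ℕ =>
        ((Real.exp (c * (Real.log ((N₀:ℝ)+m) - Real.log (N₀:ℝ) - Real.log m)) : ℝ):ℂ)
          * ((v + m)/(v - (c:ℂ) + m)))
      atTop (nhds (((Real.exp (c * (Real.log 1 - Real.log (N₀:ℝ))):ℝ):ℂ) * 1)) := by
    have he := Real.continuous_exp.continuousAt.tendsto.comp hs
    have ho := Complex.continuous_ofReal.continuousAt.tendsto.comp he
    exact ho.mul hrat
  have hFG := hF.mul hGS
  have heqev : (fun m : ℕ =>
        (((Real.exp (c * (Real.log ((N₀:ℝ)+m) - Real.log (N₀:ℝ) - Real.log m)) : ℝ):ℂ)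
          * ((v + m)/(v - (c:ℂ) + m)))
        * (((Real.exp (c * Real.log m) : ℝ) : ℂ)
          * ∏ j ∈ Finset.range (m+1), ((v - (c:ℂ) + j)/(v + j))))
      =ᶠ[atTop] (fun m : ℕ => ∏ j ∈ Finset.range m, rfac c u ((N₀:ℝ) + j)) := by
    filter_upwards [eventually_ge_atTop 1] with m hm
    rw [prod_rfac_eq hc h1 m]
    have hvm : v + (m:ℂ) ≠ 0 := ne_zero_of_re_pos' (by
      simp only [Complex.add_re, Complex.natCast_re, hvre]
      have : (0:ℝ) ≤ m := Nat.cast_nonneg m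
      linarith)
    have hvcm : v - (c:ℂ) + (m:ℂ) ≠ 0 := ne_zero_of_re_pos' (by
      have : (v - (c:ℂ) + (m:ℂ)).re = (v - (c:ℂ)).re + m := by
        simp [Complex.add_re, Complex.natCast_re]
      rw [this]
      have h0 : (0:ℝ) ≤ m := Nat.cast_nonneg m
      linarith)
    have hAB : (((Real.exp (c * (Real.log ((N₀:ℝ)+m) - Real.log (N₀:ℝ) - Real.log m)) : ℝ):ℂ)
          * ((Real.exp (c * Real.log m) : ℝ) : ℂ))
        = ((Real.exp (c * (Real.log ((N₀:ℝ) + m) - Real.log (N₀:ℝ))) : ℝ) : ℂ) := by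
      rw [← Complex.ofReal_mul, ← Real.exp_add]
      norm_num
      ring_nf
    have hqr : (v + (m:ℂ))/(v - (c:ℂ) + m) * ((v - (c:ℂ) + m)/(v + m)) = 1 := by
      field_simp
    rw [Finset.prod_range_succ]
    calc (((Real.exp (c * (Real.log ((N₀:ℝ)+m) - Real.log (N₀:ℝ) - Real.log m)) : ℝ):ℂ)
          * ((v + m)/(v - (c:ℂ) + m)))
        * (((Real.exp (c * Real.log m) : ℝ) : ℂ)
          * ((∏ j ∈ Finset.range m, ((v - (c:ℂ) + j)/(v + j))) * ((v - (c:ℂ) + m)/(v + m))))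
        = ((((Real.exp (c * (Real.log ((N₀:ℝ)+m) - Real.log (N₀:ℝ) - Real.log m)) : ℝ):ℂ)
          * ((Real.exp (c * Real.log m) : ℝ) : ℂ))
          * (∏ j ∈ Finset.range m, ((v - (c:ℂ) + j)/(v + j))))
          * ((v + (m:ℂ))/(v - (c:ℂ) + m) * ((v - (c:ℂ) + m)/(v + m))) := by ring
      _ = _ := by rw [hAB, hqr, mul_one]
  have hprod_lim : Filter.Tendsto (fun m : ℕ => ∏ j ∈ Finset.range m, rfac c u ((N₀:ℝ) + j))
      atTop (nhds (cGL c (N₀:ℝ) u)) := by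
    have := hFG.congr' heqev
    have hval : (((Real.exp (c * (Real.log 1 - Real.log (N₀:ℝ))):ℝ):ℂ) * 1)
        * (Complex.Gamma v / Complex.Gamma (v - (c:ℂ))) = cGL c (N₀:ℝ) u := by
      unfold cGL
      rw [hvdef]
      rw [Real.log_one]
      rw [show c * (0 - Real.log (N₀:ℝ)) = -c * Real.log (N₀:ℝ) by ring]
      ring
    rw [← hval]
    exact this
  have hne : ∀ m : ℕ, (∏ j ∈ Finset.range m, rfac c u ((N₀:ℝ)+j)) ≠ 0 := by
    intro m
    refine Finset.prod_ne_zero_iff.mpr fun j _ => rfac_ne_zero hc ?_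
    have : (0:ℝ) ≤ j := Nat.cast_nonneg j
    linarith
  have heq2 : ∀ m : ℕ, cGL c ((N₀:ℝ)+m) u = cGL c (N₀:ℝ) u / ∏ j ∈ Finset.range m, rfac c u ((N₀:ℝ)+j) := by
    intro m
    rw [eq_div_iff (hne m)]
    exact (cGL_prod hc h1 hu' m).symm
  have hlim2 : Filter.Tendsto (fun m : ℕ => cGL c ((N₀:ℝ)+m) u) atTop (nhds 1) := by
    have hd := (tendsto_const_nhds (x := cGL c (N₀:ℝ) u)
      (f := atTop (α := ℕ))).div hprod_lim (cGL_ne_zero hc hu')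
    rw [div_self (cGL_ne_zero hc hu')] at hd
    exact hd.congr fun m => (heq2 m).symm
  rw [← Filter.tendsto_add_atTop_iff_nat (f := fun N : ℕ => cGL c (N:ℝ) u) N₀]
  refine hlim2.congr fun m => ?_
  congr 1
  push_cast
  ring

lemma telescope_c (L : ℝ) (m : ℕ) :
    ∑ j ∈ Finset.range m, (((1/(L+(j:ℝ)):ℝ):ℂ) - ((1/(L+(j:ℝ)+1):ℝ):ℂ))
      = ((1/L - 1/(L+(m:ℝ)) : ℝ):ℂ) := by
  have h := Finset.sum_range_sub' (f := fun j : ℕ => ((1/(L+(j:ℝ)):ℝ):ℂ)) m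
  calc ∑ j ∈ Finset.range m, (((1/(L+(j:ℝ)):ℝ):ℂ) - ((1/(L+(j:ℝ)+1):ℝ):ℂ))
      = ∑ j ∈ Finset.range m,
          (((1/(L+(j:ℝ)):ℝ):ℂ) - ((1/(L+((j+1:ℕ):ℝ)):ℝ):ℂ)) := by
        refine Finset.sum_congr rfl fun j _ => ?_
        push_cast
        ring_nf
    _ = ((1/(L+((0:ℕ):ℝ)):ℝ):ℂ) - ((1/(L+(m:ℝ)):ℝ):ℂ) := h
    _ = ((1/L - 1/(L+(m:ℝ)) : ℝ):ℂ) := by push_cast; norm_num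

lemma sum_cubes_le {L : ℝ} (hL2 : 2 ≤ L) (m : ℕ) :
    ∑ j ∈ Finset.range m, (1/(L+(j:ℝ)))^3 ≤ (1/L) * (4*(1/L - 1/(L+(m:ℝ)))) := by
  have tele := Finset.sum_range_sub' (f := fun j : ℕ => 1/(L-1+(j:ℝ))) m
  have hstep : ∀ j ∈ Finset.range m, (1/(L+(j:ℝ)))^3
      ≤ (1/L) * (1/(L-1+(j:ℝ)) - 1/(L-1+((j:ℝ)+1))) := by
    intro j _
    have hj : (0:ℝ) ≤ (j:ℝ) := Nat.cast_nonneg j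
    have h1 : (0:ℝ) < L + j := by linarith
    have h2 : (0:ℝ) < L - 1 + j := by linarith
    have heq : 1/(L-1+(j:ℝ)) - 1/(L-1+((j:ℝ)+1)) = 1/((L-1+j)*(L+j)) := by
      rw [div_sub_div _ _ (by linarith) (by linarith : L-1+((j:ℝ)+1) ≠ 0)]
      have e : L-1+((j:ℝ)+1) = L + j := by ring
      rw [e]
      congr 1
      ring
    rw [heq, show (1/(L+(j:ℝ)))^3 = (1/(L+j)) * (1/((L+j)*(L+j))) by field_simp]
    apply mul_le_mul
    · apply one_div_le_one_div_of_le (by linarith) (by linarith)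
    · apply one_div_le_one_div_of_le (by positivity)
      nlinarith
    · positivity
    · positivity
  have hsum := Finset.sum_le_sum hstep
  rw [← Finset.mul_sum] at hsum
  have htele' : ∑ j ∈ Finset.range m, (1/(L-1+(j:ℝ)) - 1/(L-1+((j:ℝ)+1)))
      = 1/(L-1) - 1/(L-1+(m:ℝ)) := by
    calc ∑ j ∈ Finset.range m, (1/(L-1+(j:ℝ)) - 1/(L-1+((j:ℝ)+1)))
        = ∑ j ∈ Finset.range m, (1/(L-1+(j:ℝ)) - 1/(L-1+((j+1:ℕ):ℝ))) := by
          refine Finset.sum_congr rfl fun j _ => ?_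
          push_cast
          norm_num
      _ = 1/(L-1+((0:ℕ):ℝ)) - 1/(L-1+(m:ℝ)) := tele
      _ = 1/(L-1) - 1/(L-1+(m:ℝ)) := by norm_num
  rw [htele'] at hsum
  refine le_trans hsum ?_
  have hm : (0:ℝ) ≤ (m:ℝ) := Nat.cast_nonneg m
  have h4 : 1/(L-1) - 1/(L-1+(m:ℝ)) ≤ 4*(1/L - 1/(L+(m:ℝ))) := by
    have e1 : 1/(L-1) - 1/(L-1+(m:ℝ)) = (m:ℝ)/((L-1)*(L-1+(m:ℝ))) := by
      rw [div_sub_div _ _ (by linarith) (by linarith)]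
      congr 1
      ring
    have e2 : 1/L - 1/(L+(m:ℝ)) = (m:ℝ)/(L*(L+(m:ℝ))) := by
      rw [div_sub_div _ _ (by linarith) (by linarith)]
      congr 1
      ring
    have key : L*(L+(m:ℝ)) ≤ 4*((L-1)*(L-1+(m:ℝ))) := by
      nlinarith [mul_nonneg hm (by linarith : (0:ℝ) ≤ 3*L-4),
        mul_nonneg (by linarith : (0:ℝ) ≤ 3*L-2) (by linarith : (0:ℝ) ≤ L-2)]
    rw [e1, e2, show 4*((m:ℝ)/(L*(L+(m:ℝ)))) = (4*(m:ℝ))/(L*(L+(m:ℝ))) by ring,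
      div_le_div_iff₀ (by nlinarith) (by nlinarith)]
    nlinarith [mul_le_mul_of_nonneg_left key hm]
  exact mul_le_mul_of_nonneg_left h4 (by positivity)

end step

/-- **The pointwise limit (eq:IcT_conv) from Step 1 of the paper's proof of its β = 2
edge-fluctuation theorems.**

Fix `c > 0`, `a > 0`, `b > 0`, `γ > 0`. For each `N` let `α_τ(N) ≥ a` be reals,
`M_τ(N) ≥ bN` positive integers, and `T(N) ≥ 1` integers with
`∑_{τ=1}^{T(N)} (1/(N+α_τ−1) − 1/(N+M_τ+α_τ−1)) → γ`.  Then for every `u ∈ ℂ`,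
`₍c₎G_N(u) ∏_{τ=1}^{T(N)} ₍c₎G_{N+α_τ−1}(u)/₍c₎G_{N+M_τ+α_τ−1}(u) → exp(−γ(c(c+1)/2 + cu))`. -/
theorem cGL_product_tendsto_interpolating_factor
    (c a b γ : ℝ) (hc : 0 < c) (ha : 0 < a) (hb : 0 < b) (hγ : 0 < γ)
    (α : ℕ → ℕ → ℝ) (M : ℕ → ℕ → ℕ) (T : ℕ → ℕ)
    (hα : ∀ (N τ : ℕ), a ≤ α N τ) (hM : ∀ (N τ : ℕ), b * (N : ℝ) ≤ (M N τ : ℝ))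
    (hMpos : ∀ (N τ : ℕ), 0 < M N τ)
    (hT : ∀ N, 1 ≤ T N)
    (hγlim : Filter.Tendsto
      (fun N : ℕ => ∑ τ ∈ Finset.Icc 1 (T N),
        (1 / ((N : ℝ) + α N τ - 1) - 1 / ((N : ℝ) + (M N τ : ℝ) + α N τ - 1)))
      Filter.atTop (nhds γ))
    (u : ℂ) :
    Filter.Tendsto
      (fun N : ℕ => cGL c (N : ℝ) u *
        ∏ τ ∈ Finset.Icc 1 (T N),
          cGL c ((N : ℝ) + α N τ - 1) u / cGL c ((N : ℝ) + (M N τ : ℝ) + α N τ - 1) u)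
      Filter.atTop
      (nhds (Complex.exp (-(γ : ℂ) * ((c * (c + 1) / 2 : ℝ) + (c : ℂ) * u)))) := by
  obtain ⟨C, hCpos, x₁, hx₁2, hx₁u, hbnd⟩ := rfac_bound (u := u) hc
  set D : ℕ → ℝ := fun N => ∑ τ ∈ Finset.Icc 1 (T N),
      (1 / ((N : ℝ) + α N τ - 1) - 1 / ((N : ℝ) + (M N τ : ℝ) + α N τ - 1)) with hD
  set E : ℕ → ℂ := fun N => ∑ τ ∈ Finset.Icc 1 (T N), ∑ j ∈ Finset.range (M N τ),
      (Complex.log (rfac c u ((N:ℝ) + α N τ - 1 + j))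
        + Kc c u * (((1/((N:ℝ) + α N τ - 1 + (j:ℝ)):ℝ):ℂ)
            - ((1/((N:ℝ) + α N τ - 1 + (j:ℝ) + 1):ℝ):ℂ))) with hE
  have hPev : ∀ᶠ N : ℕ in Filter.atTop, x₁ + 1 ≤ (N:ℝ) := by
    obtain ⟨N₁, hN₁⟩ := exists_nat_gt (x₁ + 1)
    filter_upwards [eventually_ge_atTop N₁] with N hN
    have : (N₁ : ℝ) ≤ (N : ℝ) := Nat.cast_le.mpr hN
    linarith
  -- per-N facts
  have hLfacts : ∀ N : ℕ, x₁ + 1 ≤ (N:ℝ) → ∀ τ : ℕ,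
      x₁ ≤ (N:ℝ) + α N τ - 1 ∧ 1/((N:ℝ) + α N τ - 1) ≤ 2/(N:ℝ) := by
    intro N hN τ
    have hα' := hα N τ
    have hL : x₁ ≤ (N:ℝ) + α N τ - 1 := by linarith
    have hN2 : (2:ℝ) ≤ (N:ℝ) := by linarith
    have hLN : (N:ℝ)/2 ≤ (N:ℝ) + α N τ - 1 := by linarith
    refine ⟨hL, ?_⟩
    rw [div_le_div_iff₀ (by linarith) (by linarith)]
    linarith
  -- step (iii): E and the sum of logs
  have hSsplit : ∀ N : ℕ, x₁ + 1 ≤ (N:ℝ) →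
      E N - Kc c u * ((D N : ℝ):ℂ)
        = ∑ τ ∈ Finset.Icc 1 (T N), ∑ j ∈ Finset.range (M N τ),
            Complex.log (rfac c u ((N:ℝ) + α N τ - 1 + j)) := by
    intro N hN
    have hE' : E N = (∑ τ ∈ Finset.Icc 1 (T N), ∑ j ∈ Finset.range (M N τ),
          Complex.log (rfac c u ((N:ℝ) + α N τ - 1 + j)))
        + Kc c u * ((D N : ℝ):ℂ) := by
      simp only [hE]
      have hper : ∀ τ ∈ Finset.Icc 1 (T N),
          (∑ j ∈ Finset.range (M N τ),
            (Complex.log (rfac c u ((N:ℝ) + α N τ - 1 + j))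
              + Kc c u * (((1/((N:ℝ) + α N τ - 1 + (j:ℝ)):ℝ):ℂ)
                  - ((1/((N:ℝ) + α N τ - 1 + (j:ℝ) + 1):ℝ):ℂ))))
          = (∑ j ∈ Finset.range (M N τ), Complex.log (rfac c u ((N:ℝ) + α N τ - 1 + j)))
            + Kc c u * (((1 / ((N : ℝ) + α N τ - 1)
                - 1 / ((N : ℝ) + (M N τ : ℝ) + α N τ - 1) : ℝ)):ℂ) := by
        intro τ _
        rw [Finset.sum_add_distrib, ← Finset.mul_sum,
          telescope_c ((N:ℝ) + α N τ - 1) (M N τ)]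
        congr 3
        · ring
      rw [Finset.sum_congr rfl hper, Finset.sum_add_distrib, ← Finset.mul_sum,
        ← Complex.ofReal_sum]
    rw [hE']
    ring
  -- step (i)+(ii): eventual equality of the whole expression
  have hmain : ∀ᶠ N : ℕ in Filter.atTop,
      cGL c (N : ℝ) u *
        ∏ τ ∈ Finset.Icc 1 (T N),
          cGL c ((N : ℝ) + α N τ - 1) u / cGL c ((N : ℝ) + (M N τ : ℝ) + α N τ - 1) u
      = cGL c (N : ℝ) u * Complex.exp (E N - Kc c u * ((D N : ℝ):ℂ)) := by
    filter_upwards [hPev] with N hN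
    congr 1
    rw [hSsplit N hN, Complex.exp_sum]
    refine Finset.prod_congr rfl fun τ _ => ?_
    obtain ⟨hL, -⟩ := hLfacts N hN τ
    have hL1 : (1:ℝ) ≤ (N:ℝ) + α N τ - 1 := by linarith
    have hLu : u.re + c + 1 ≤ (N:ℝ) + α N τ - 1 := by linarith
    have hcast : (N : ℝ) + (M N τ : ℝ) + α N τ - 1 = ((N:ℝ) + α N τ - 1) + (M N τ : ℕ) := by
      push_cast; ring
    rw [hcast, cGL_div_eq_prod hc hL1 hLu (M N τ), Complex.exp_sum]
    refine Finset.prod_congr rfl fun j _ => ?_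
    have hxj : x₁ ≤ (N:ℝ) + α N τ - 1 + j := by
      have : (0:ℝ) ≤ j := Nat.cast_nonneg j
      linarith
    exact (Complex.exp_log (hbnd _ hxj).1).symm
  -- the bound on E
  have hEbnd : ∀ᶠ N : ℕ in Filter.atTop, ‖E N‖ ≤ 8*C/(N:ℝ) * D N := by
    filter_upwards [hPev] with N hN
    have hN0 : (0:ℝ) < N := by linarith
    simp only [hE]
    refine le_trans (norm_sum_le _ _) ?_
    simp only [hD]
    rw [Finset.mul_sum]
    refine Finset.sum_le_sum fun τ _ => ?_
    obtain ⟨hL, hLN⟩ := hLfacts N hN τ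
    set L := (N:ℝ) + α N τ - 1 with hLdef
    have hL2 : (2:ℝ) ≤ L := le_trans hx₁2 hL
    refine le_trans (norm_sum_le _ _) ?_
    have hterm : ∀ j ∈ Finset.range (M N τ),
        ‖Complex.log (rfac c u (L + j))
          + Kc c u * (((1/(L + (j:ℝ)):ℝ):ℂ) - ((1/(L + (j:ℝ) + 1):ℝ):ℂ))‖
        ≤ C * (1/(L+(j:ℝ)))^3 := by
      intro j _
      have hxj : x₁ ≤ L + j := by
        have : (0:ℝ) ≤ j := Nat.cast_nonneg j
        linarith
      exact (hbnd _ hxj).2.2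
    refine le_trans (Finset.sum_le_sum hterm) ?_
    rw [← Finset.mul_sum]
    have hcub := sum_cubes_le hL2 (M N τ)
    have hd : (0:ℝ) ≤ 1/L - 1/(L+(M N τ:ℝ)) := by
      have h1 : (0:ℝ) < L := by linarith
      have h2 : L ≤ L + (M N τ:ℝ) := by
        have : (0:ℝ) ≤ (M N τ:ℝ) := Nat.cast_nonneg _
        linarith
      have := one_div_le_one_div_of_le h1 h2
      linarith
    have hstep2 : (1/L) * (4*(1/L - 1/(L+(M N τ:ℝ))))
        ≤ (2/(N:ℝ)) * (4*(1/L - 1/(L+(M N τ:ℝ)))) := by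
      apply mul_le_mul_of_nonneg_right hLN (by linarith)
    have hfin : C * ((1/L) * (4*(1/L - 1/(L+(M N τ:ℝ)))))
        ≤ 8*C/(N:ℝ) * (1/L - 1/(L+(M N τ:ℝ))) := by
      calc C * ((1/L) * (4*(1/L - 1/(L+(M N τ:ℝ)))))
          ≤ C * ((2/(N:ℝ)) * (4*(1/L - 1/(L+(M N τ:ℝ))))) := by
            apply mul_le_mul_of_nonneg_left hstep2 (le_of_lt hCpos)
        _ = 8*C/(N:ℝ) * (1/L - 1/(L+(M N τ:ℝ))) := by
            field_simp
            ring
    refine le_trans (mul_le_mul_of_nonneg_left hcub (le_of_lt hCpos)) (le_trans hfin ?_)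
    have : 1/L - 1/(L+(M N τ:ℝ)) = 1 / ((N : ℝ) + α N τ - 1) - 1 / ((N : ℝ) + (M N τ : ℝ) + α N τ - 1) := by
      rw [hLdef]
      congr 2
      ring
    rw [this]
  -- limits
  have hcoef : Filter.Tendsto (fun N : ℕ => 8*C/(N:ℝ) * D N) Filter.atTop (nhds 0) := by
    have h1 : Filter.Tendsto (fun N : ℕ => 8*C*(1/(N:ℝ))) Filter.atTop (nhds 0) := by
      have := tendsto_one_div_atTop_nhds_zero_nat.const_mul (8*C)
      simpa using this
    have := h1.mul hγlim
    rw [zero_mul] at this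
    refine this.congr fun N => ?_
    ring
  have hE0 : Filter.Tendsto E Filter.atTop (nhds 0) := by
    rw [tendsto_zero_iff_norm_tendsto_zero]
    refine squeeze_zero' (by filter_upwards with N; positivity) hEbnd hcoef
  have hDlim : Filter.Tendsto (fun N : ℕ => ((D N : ℝ):ℂ)) Filter.atTop (nhds ((γ:ℝ):ℂ)) :=
    Complex.continuous_ofReal.continuousAt.tendsto.comp hγlim
  have hSlim : Filter.Tendsto (fun N : ℕ => E N - Kc c u * ((D N : ℝ):ℂ))
      Filter.atTop (nhds (0 - Kc c u * ((γ:ℝ):ℂ))) :=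
    hE0.sub (hDlim.const_mul (Kc c u))
  have hexp : Filter.Tendsto (fun N : ℕ => Complex.exp (E N - Kc c u * ((D N : ℝ):ℂ)))
      Filter.atTop (nhds (Complex.exp (0 - Kc c u * ((γ:ℝ):ℂ)))) :=
    (Complex.continuous_exp.continuousAt.tendsto).comp hSlim
  have hfinal := (cGL_nat_tendsto_one (u := u) hc).mul hexp
  rw [one_mul] at hfinal
  have hval : Complex.exp (0 - Kc c u * ((γ:ℝ):ℂ))
      = Complex.exp (-(γ : ℂ) * ((c * (c + 1) / 2 : ℝ) + (c : ℂ) * u)) := by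
    congr 1
    unfold Kc
    push_cast
    ring
  rw [hval] at hfinal
  have hmain' : (fun N : ℕ => cGL c (N : ℝ) u *
        ∏ τ ∈ Finset.Icc 1 (T N),
          cGL c ((N : ℝ) + α N τ - 1) u / cGL c ((N : ℝ) + (M N τ : ℝ) + α N τ - 1) u)
      =ᶠ[Filter.atTop]
      (fun N : ℕ => cGL c (N : ℝ) u * Complex.exp (E N - Kc c u * ((D N : ℝ):ℂ))) := hmain
  exact hfinal.congr' hmain'.symm
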